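/- arXiv:2506.07625 — 3 statements merged into one kernel-verified Lean document; each statement's English description precedes it below -/
import Mathlib

section
/- Let x₀ ∈ (0,1) and define xₙ = xₙ₋₁·(1 − xₙ₋₁) for n ≥ 1. Then the limit limₙ→∞ n²·(xₙ − 1/n + (log n)/n²) exists as a real number. -/
open Filter Real Finset

lemma ML_log_lower (a : ℝ) (ha : 0 < a) :
    1/(a+1) ≤ Real.log (a+1) - Real.log a := by
  rw [← Real.log_div (by positivity) (ne_of_gt ha)]
  have h := Real.one_sub_inv_le_log_of_pos (x := (a+1)/a) (by positivity)
  have h2 : 1 - ((a+1)/a)⁻¹ = 1/(a+1) := by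
    rw [inv_div]; field_simp; ring
  linarith [h2 ▸ h]

lemma ML_log_upper (a : ℝ) (ha : 0 < a) :
    Real.log (a+1) - Real.log a ≤ 1/a := by
  rw [← Real.log_div (by positivity) (ne_of_gt ha)]
  have h := Real.log_le_sub_one_of_pos (x := (a+1)/a) (by positivity)
  have h2 : (a+1)/a - 1 = 1/a := by field_simp; ring
  linarith [h2 ▸ h]

lemma ML_harmonic_le (n : ℕ) :
    ∑ k ∈ Finset.range n, (1:ℝ)/(k+1) ≤ 1 + Real.log n := by
  induction n with
  | zero => simp
  | succ n ih =>
    rcases Nat.eq_zero_or_pos n with h0 | hp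
    · subst h0; simp
    · rw [Finset.sum_range_succ]
      have := ML_log_lower n (by exact_mod_cast hp)
      push_cast
      linarith

lemma ML_log_nat_mono {m n : ℕ} (h : m ≤ n) : Real.log m ≤ Real.log n := by
  rcases Nat.eq_zero_or_pos m with h0 | hp
  · subst h0; simpa using Real.log_natCast_nonneg n
  · exact Real.log_le_log (by exact_mod_cast hp) (by exact_mod_cast h)

set_option maxHeartbeats 1000000 in
lemma ML_summable (K : ℝ) (hK : 0 ≤ K) :
    Summable (fun n : ℕ => (K + Real.log (n+1)) / ((n:ℝ)+1)^2) := by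
  have h32 : Summable (fun n : ℕ => 1/((n:ℝ)+1)^((3:ℝ)/2)) := by
    have h := (Real.summable_one_div_nat_rpow (p := 3/2)).2 (by norm_num)
    have := (summable_nat_add_iff (f := fun n : ℕ => 1/(n:ℝ)^((3:ℝ)/2)) 1).2 h
    exact this.congr (fun n => by norm_num)
  have h2 : Summable (fun n : ℕ => 1/((n:ℝ)+1)^2) := by
    have h := (Real.summable_one_div_nat_pow (p := 2)).2 (by norm_num)
    have := (summable_nat_add_iff (f := fun n : ℕ => 1/(n:ℝ)^2) 1).2 h
    exact this.congr (fun n => by norm_num)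
  apply Summable.of_nonneg_of_le
    (f := fun n : ℕ => K * (1/((n:ℝ)+1)^2) + 2 * (1/((n:ℝ)+1)^((3:ℝ)/2)))
    ?_ ?_ ((h2.mul_left K).add (h32.mul_left 2))
  · intro n
    have : (0:ℝ) ≤ Real.log (n+1) := Real.log_nonneg (by linarith [Nat.cast_nonneg (α := ℝ) n])
    positivity
  · intro n
    show _ ≤ K * (1/((n:ℝ)+1)^2) + 2 * (1/((n:ℝ)+1)^((3:ℝ)/2))
    set t : ℝ := (n:ℝ)+1 with ht
    have ht1 : (1:ℝ) ≤ t := by rw [ht]; linarith [Nat.cast_nonneg (α := ℝ) n]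
    have ht0 : (0:ℝ) < t := by linarith
    have hst : 0 < Real.sqrt t := Real.sqrt_pos.2 ht0
    have hlog : Real.log t ≤ 2 * Real.sqrt t := by
      have h := Real.log_le_sub_one_of_pos hst
      have h2 : Real.log t = 2 * Real.log (Real.sqrt t) := by
        rw [Real.log_sqrt ht0.le]; ring
      nlinarith [Real.sqrt_nonneg t]
    have hr : t^((3:ℝ)/2) * Real.sqrt t = t^2 := by
      rw [Real.sqrt_eq_rpow, ← Real.rpow_add ht0, ← Real.rpow_natCast t 2]
      norm_num
    have hrpos : (0:ℝ) < t^((3:ℝ)/2) := Real.rpow_pos_of_pos ht0 _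
    have key : Real.sqrt t / t^2 = 1/t^((3:ℝ)/2) := by
      rw [← hr]; field_simp
    rw [add_div]
    gcongr ?_ + ?_
    · rw [div_eq_mul_one_div]
    · calc Real.log t / t^2 ≤ 2 * Real.sqrt t / t^2 := by
            gcongr
        _ = 2 * (1/t^((3:ℝ)/2)) := by rw [mul_div_assoc, key]

/-- For the logistic recursion `x (n+1) = x n * (1 - x n)` with `x 0 ∈ (0,1)`, the limit
`lim n² (x n - 1/n + (log n)/n²)` exists as a real number. -/
theorem logistic_iterates_refined_limit (x : ℕ → ℝ)
    (hx0 : x 0 ∈ Set.Ioo (0 : ℝ) 1)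
    (hrec : ∀ n : ℕ, x (n + 1) = x n * (1 - x n)) :
    ∃ L : ℝ, Tendsto
      (fun n : ℕ => (n : ℝ) ^ 2 * (x n - 1 / n + Real.log n / (n : ℝ) ^ 2))
      atTop (nhds L) := by
  obtain ⟨hx0p, hx01⟩ := hx0
  have hx : ∀ n, 0 < x n ∧ x n < 1 := by
    intro n
    induction n with
    | zero => exact ⟨hx0p, hx01⟩
    | succ n ih =>
      rw [hrec n]
      refine ⟨mul_pos ih.1 (by linarith [ih.2]), ?_⟩
      nlinarith [ih.1, ih.2]
  set y : ℕ → ℝ := fun n => (x n)⁻¹ with hydef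
  have hxy : ∀ n, x n = (y n)⁻¹ := fun n => (inv_inv (x n)).symm
  have hy1 : ∀ n, 1 < y n := by
    intro n
    have h := hx n
    have hmul : x n * (x n)⁻¹ = 1 := mul_inv_cancel₀ (ne_of_gt h.1)
    have hip : 0 < (x n)⁻¹ := inv_pos.2 h.1
    show 1 < (x n)⁻¹
    nlinarith [h.1, h.2]
  set d : ℕ → ℝ := fun n => 1/(y n - 1) with hddef
  have hd_pos : ∀ n, 0 < d n := by
    intro n; have := hy1 n
    exact div_pos one_pos (by linarith)
  have hyrec : ∀ n, y (n+1) = y n + 1 + d n := by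
    intro n
    have h := hx n
    have hne : x n ≠ 0 := ne_of_gt h.1
    have hne2 : (1 : ℝ) - x n ≠ 0 := ne_of_gt (by linarith [h.2])
    have hyd : y n - 1 = (1 - x n) / x n := by
      show (x n)⁻¹ - 1 = (1 - x n) / x n
      field_simp
    show (x (n+1))⁻¹ = (x n)⁻¹ + 1 + 1/(y n - 1)
    rw [hrec n, hyd]
    field_simp
    ring
  have hlow : ∀ n, y 0 + n ≤ y n := by
    intro n
    induction n with
    | zero => simp
    | succ n ih =>
      have := hd_pos n
      rw [hyrec n]; push_cast; linarith
  have hlow' : ∀ n : ℕ, (n : ℝ) < y n - 1 := by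
    intro n
    have := hlow n; have := hy1 0
    linarith
  have hysum : ∀ n, y n = y 0 + n + ∑ k ∈ Finset.range n, d k := by
    intro n
    induction n with
    | zero => simp
    | succ n ih =>
      rw [hyrec n, ih, Finset.sum_range_succ]; push_cast; ring
  set C : ℝ := y 0 + d 0 + 1 with hCdef
  have hC0 : 0 < C := by have := hy1 0; have := hd_pos 0; rw [hCdef]; linarith
  have hupper : ∀ n : ℕ, y n - n ≤ C + Real.log n := by
    intro n
    cases n with
    | zero =>
      have := hd_pos 0
      simp only [Nat.cast_zero, Real.log_zero]
      rw [hCdef]; linarith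
    | succ m =>
      rw [hysum (m+1), Finset.sum_range_succ']
      have h1 : ∑ k ∈ Finset.range m, d (k+1) ≤ ∑ k ∈ Finset.range m, (1:ℝ)/(k+1) := by
        apply Finset.sum_le_sum
        intro k _
        have hk := hlow' (k+1)
        have hk2 : (0:ℝ) < (k:ℝ)+1 := by positivity
        show 1/(y (k+1) - 1) ≤ 1/((k:ℝ)+1)
        apply one_div_le_one_div_of_le hk2
        push_cast at hk ⊢; linarith
      have h2 := ML_harmonic_le m
      have h3 : Real.log m ≤ Real.log ((m:ℝ)+1) := by
        have := ML_log_nat_mono (Nat.le_succ m); push_cast at this; exact this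
      push_cast
      linarith
  set a : ℕ → ℝ := fun n => y n - n - Real.log n with hadef
  set b : ℕ → ℝ := fun n => a (n+1) - a n with hbdef
  have hbb : ∀ n : ℕ, 1 ≤ n → |b n| ≤ (C + 1 + Real.log n)/(n:ℝ)^2 := by
    intro n hn
    have hn0 : (0:ℝ) < n := by exact_mod_cast hn
    have hyn := hy1 n
    have hylow := hlow' n
    have hup := hupper n
    have hlogn : (0:ℝ) ≤ Real.log n := by
      have := ML_log_nat_mono hn; simpa using this
    have hbform : b n = d n - (Real.log (n+1) - Real.log n) := by
      show (y (n+1) - (n+1:ℕ) - Real.log (n+1:ℕ)) - (y n - n - Real.log n)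
          = d n - (Real.log (n+1) - Real.log n)
      rw [hyrec n]; push_cast; ring
    have e1 : d n ≤ 1/n := by
      show 1/(y n - 1) ≤ 1/(n:ℝ)
      apply one_div_le_one_div_of_le hn0
      linarith
    have hsq : (0:ℝ) < (n:ℝ)^2 := pow_pos hn0 2
    have e2 : 1/(n:ℝ) - d n ≤ (C + Real.log n)/(n:ℝ)^2 := by
      have hyne : (0:ℝ) < y n - 1 := by linarith
      have hexp : 1/(n:ℝ) - d n = (y n - 1 - n)/((n:ℝ) * (y n - 1)) := by
        show 1/(n:ℝ) - 1/(y n - 1) = (y n - 1 - n)/((n:ℝ) * (y n - 1))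
        rw [div_sub_div _ _ (ne_of_gt hn0) (ne_of_gt hyne)]
        ring_nf
      rw [hexp]
      apply div_le_div₀ (by linarith) (by linarith) hsq (by nlinarith)
    have e3l := ML_log_lower n hn0
    have e3u := ML_log_upper n hn0
    have e4 : 1/(n:ℝ) - 1/((n:ℝ)+1) ≤ 1/(n:ℝ)^2 := by
      rw [div_sub_div _ _ (ne_of_gt hn0) (by positivity)]
      apply div_le_div₀ (by norm_num) (by linarith) hsq (by nlinarith)
    have hd0 := hd_pos n
    rw [hbform, abs_le]
    constructor
    · have e5 : (C + Real.log n)/(n:ℝ)^2 ≤ (C + 1 + Real.log n)/(n:ℝ)^2 :=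
        (div_le_div_iff_of_pos_right hsq).2 (by linarith)
      linarith
    · have e6 : (1:ℝ)/(n:ℝ)^2 ≤ (C + 1 + Real.log n)/(n:ℝ)^2 :=
        (div_le_div_iff_of_pos_right hsq).2 (by linarith)
      linarith
  have hbsum : Summable b := by
    rw [← summable_nat_add_iff 1]
    apply Summable.of_norm_bounded
      (g := fun n : ℕ => ((C+1) + Real.log ((n:ℝ)+1)) / ((n:ℝ)+1)^2)
      (ML_summable (C+1) (by linarith))
    intro n
    have h := hbb (n+1) (by omega)
    push_cast at h
    rw [Real.norm_eq_abs]
    exact h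
  have hatel : ∀ n, a n = a 0 + ∑ k ∈ Finset.range n, b k := by
    intro n
    have ht : ∑ k ∈ Finset.range n, b k = a n - a 0 := Finset.sum_range_sub a n
    linarith
  have haT : Tendsto a atTop (nhds (a 0 + ∑' n, b n)) := by
    have h := hbsum.hasSum.tendsto_sum_nat
    have h2 := (tendsto_const_nhds (x := a 0) (f := atTop (α := ℕ))).add h
    exact h2.congr (fun n => (hatel n).symm)
  set l : ℝ := a 0 + ∑' n, b n with hldef
  have hlogdiv : Tendsto (fun n : ℕ => Real.log n / n) atTop (nhds 0) := by
    have h := Real.tendsto_pow_log_div_mul_add_atTop 1 0 1 one_ne_zero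
    have h2 := h.comp (tendsto_natCast_atTop_atTop (R := ℝ))
    simpa [Function.comp_def] using h2
  have hlog2div : Tendsto (fun n : ℕ => (Real.log n)^2 / n) atTop (nhds 0) := by
    have h := Real.tendsto_pow_log_div_mul_add_atTop 1 0 2 one_ne_zero
    have h2 := h.comp (tendsto_natCast_atTop_atTop (R := ℝ))
    simpa [Function.comp_def] using h2
  have hadiv : Tendsto (fun n : ℕ => a n / n) atTop (nhds 0) :=
    haT.div_atTop tendsto_natCast_atTop_atTop
  have hyn_div : Tendsto (fun n : ℕ => y n / n) atTop (nhds 1) := by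
    have key : Tendsto (fun n : ℕ => 1 + (Real.log n / n + a n / n)) atTop
        (nhds (1 + (0 + 0))) := tendsto_const_nhds.add (hlogdiv.add hadiv)
    rw [show (1:ℝ) + (0+0) = 1 by ring] at key
    apply key.congr'
    filter_upwards [eventually_ge_atTop 1] with n hn
    have hn0 : (0:ℝ) < n := by exact_mod_cast hn
    have hane : a n = y n - n - Real.log n := rfl
    field_simp [hane]
    linarith
  have hz : Tendsto (fun n : ℕ => (n:ℝ) / y n) atTop (nhds 1) := by
    have h := hyn_div.inv₀ one_ne_zero
    rw [inv_one] at h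
    exact h.congr (fun n => by rw [inv_div])
  have ht2 : Tendsto (fun n : ℕ => Real.log n * (y n - n) / y n) atTop (nhds 0) := by
    have hub : Tendsto (fun n : ℕ => C * (Real.log n / n) + (Real.log n)^2/n) atTop
        (nhds (C*0 + 0)) := (hlogdiv.const_mul C).add hlog2div
    rw [show C*0 + 0 = (0:ℝ) by ring] at hub
    apply tendsto_of_tendsto_of_tendsto_of_le_of_le' tendsto_const_nhds hub
    · filter_upwards [eventually_ge_atTop 1] with n hn
      have hlogn : (0:ℝ) ≤ Real.log n := by
        have := ML_log_nat_mono hn; simpa using this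
      have h1 := hlow n
      have h2 := hy1 0
      have h3 := hy1 n
      exact div_nonneg (mul_nonneg hlogn (by linarith)) (by linarith)
    · filter_upwards [eventually_ge_atTop 1] with n hn
      have hn0 : (0:ℝ) < n := by exact_mod_cast hn
      have hlogn : (0:ℝ) ≤ Real.log n := by
        have := ML_log_nat_mono hn; simpa using this
      have h1 := hlow n
      have h2 := hy1 0
      have h3 := hy1 n
      have hup := hupper n
      calc Real.log n * (y n - n) / y n ≤ Real.log n * (C + Real.log n) / n := by
            apply div_le_div₀ (by nlinarith) (by nlinarith) hn0 (by linarith)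
        _ = C * (Real.log n / n) + (Real.log n)^2/n := by ring
  refine ⟨-l, ?_⟩
  have hmain : Tendsto (fun n : ℕ => -(a n * ((n:ℝ)/y n)) + Real.log n * (y n - n)/y n)
      atTop (nhds (-(l*1) + 0)) := ((haT.mul hz).neg).add ht2
  rw [show -(l*1) + 0 = -l by ring] at hmain
  apply hmain.congr'
  filter_upwards [eventually_ge_atTop 1] with n hn
  have hn0 : (0:ℝ) < n := by exact_mod_cast hn
  have hyn := hy1 n
  have hane : a n = y n - n - Real.log n := rfl
  rw [hxy n, hane]
  field_simp
  ring
end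

section
/- Let x₀ ∈ (0,π) and define xₙ = sin(xₙ₋₁) for n ≥ 1. Then the limit limₙ→∞ 2n^{3/2}·(xₙ/√3 − n^{−1/2} + (3/10)·(log n)/n^{3/2}) exists as a real number. -/
open Filter Topology

section Aux
open Real

private lemma aux_nonneg_of_deriv {f f' : ℝ → ℝ} (hf : ∀ y : ℝ, HasDerivAt f (f' y) y)
    (h0 : f 0 = 0) (hd : ∀ y : ℝ, 0 ≤ y → 0 ≤ f' y) : ∀ x : ℝ, 0 ≤ x → 0 ≤ f x := by
  intro x hx
  have hdiff : Differentiable ℝ f := fun y => (hf y).differentiableAt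
  have hmono : MonotoneOn f (Set.Ici (0:ℝ)) := by
    apply monotoneOn_of_deriv_nonneg (convex_Ici 0) hdiff.continuous.continuousOn
      (hdiff.differentiableOn)
    intro y hy
    rw [interior_Ici] at hy
    rw [(hf y).deriv]
    exact hd y hy.le
  have := hmono (Set.self_mem_Ici) (Set.mem_Ici.2 hx) hx
  rwa [h0] at this

private lemma sin_lb1 (x : ℝ) (hx : 0 ≤ x) : x - x^3/6 ≤ sin x := by
  have := aux_nonneg_of_deriv (f := fun y => Real.sin y - y + y^3/6)
    (f' := fun y => Real.cos y - 1 + y^2/2) ?_ (by norm_num) ?_ x hx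
  · linarith
  · intro y
    have h := ((Real.hasDerivAt_sin y).sub (hasDerivAt_id y)).add ((hasDerivAt_pow 3 y).div_const 6)
    refine h.congr_deriv ?_
    push_cast; ring
  · intro y hy
    nlinarith [Real.one_sub_sq_div_two_le_cos (x := y)]

private lemma cos_ub4 (x : ℝ) (hx : 0 ≤ x) : cos x ≤ 1 - x^2/2 + x^4/24 := by
  have := aux_nonneg_of_deriv (f := fun y => 1 - y^2/2 + y^4/24 - Real.cos y)
    (f' := fun y => -y + y^3/6 + Real.sin y) ?_ (by norm_num) ?_ x hx
  · linarith
  · intro y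
    have h := (((hasDerivAt_const y (1:ℝ)).sub ((hasDerivAt_pow 2 y).div_const 2)).add
      ((hasDerivAt_pow 4 y).div_const 24)).sub (Real.hasDerivAt_cos y)
    refine h.congr_deriv ?_
    push_cast; ring
  · intro y hy
    nlinarith [sin_lb1 y hy]

private lemma sin_ub5 (x : ℝ) (hx : 0 ≤ x) : sin x ≤ x - x^3/6 + x^5/120 := by
  have := aux_nonneg_of_deriv (f := fun y => y - y^3/6 + y^5/120 - Real.sin y)
    (f' := fun y => 1 - y^2/2 + y^4/24 - Real.cos y) ?_ (by norm_num) ?_ x hx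
  · linarith
  · intro y
    have h := (((hasDerivAt_id y).sub ((hasDerivAt_pow 3 y).div_const 6)).add
      ((hasDerivAt_pow 5 y).div_const 120)).sub (Real.hasDerivAt_sin y)
    refine h.congr_deriv ?_
    push_cast; ring
  · intro y hy
    nlinarith [cos_ub4 y hy]

private lemma cos_lb6 (x : ℝ) (hx : 0 ≤ x) : 1 - x^2/2 + x^4/24 - x^6/720 ≤ cos x := by
  have := aux_nonneg_of_deriv (f := fun y => Real.cos y - (1 - y^2/2 + y^4/24 - y^6/720))
    (f' := fun y => (y - y^3/6 + y^5/120) - Real.sin y) ?_ (by norm_num) ?_ x hx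
  · linarith
  · intro y
    have h := (Real.hasDerivAt_cos y).sub ((((hasDerivAt_const y (1:ℝ)).sub
      ((hasDerivAt_pow 2 y).div_const 2)).add ((hasDerivAt_pow 4 y).div_const 24)).sub
      ((hasDerivAt_pow 6 y).div_const 720))
    refine h.congr_deriv ?_
    push_cast; ring
  · intro y hy
    nlinarith [sin_ub5 y hy]

private lemma sin_lb7 (x : ℝ) (hx : 0 ≤ x) : x - x^3/6 + x^5/120 - x^7/5040 ≤ sin x := by
  have := aux_nonneg_of_deriv (f := fun y => Real.sin y - (y - y^3/6 + y^5/120 - y^7/5040))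
    (f' := fun y => Real.cos y - (1 - y^2/2 + y^4/24 - y^6/720)) ?_ (by norm_num) ?_ x hx
  · linarith
  · intro y
    have h := (Real.hasDerivAt_sin y).sub ((((hasDerivAt_id y).sub
      ((hasDerivAt_pow 3 y).div_const 6)).add ((hasDerivAt_pow 5 y).div_const 120)).sub
      ((hasDerivAt_pow 7 y).div_const 5040))
    refine h.congr_deriv ?_
    push_cast; ring
  · intro y hy
    nlinarith [cos_lb6 y hy]

private lemma polyA (t : ℝ) (h0 : 0 ≤ t) (h1 : t ≤ 1/4) :
    15 ≤ (1 - t/6 + t^2/120 - t^3/5040)^2 * (15 + 5*t + t^2 + 15*t^3) := by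
  have ht3 : (0:ℝ) ≤ t^3 := pow_nonneg h0 3
  have ht5 : (0:ℝ) ≤ t^5 := pow_nonneg h0 5
  have ht7 : (0:ℝ) ≤ t^7 := pow_nonneg h0 7
  have ht9 : (0:ℝ) ≤ t^9 := pow_nonneg h0 9
  have h4 : t^4 ≤ t^3/4 := by nlinarith
  have h6 : t^6 ≤ t^3/64 := by nlinarith [pow_nonneg h0 4, pow_nonneg h0 2, sq_nonneg (t^2 - t/4), sq_nonneg (t^3 - t^2/4)]
  have h8 : t^8 ≤ t^3/1024 := by nlinarith [pow_nonneg h0 4, sq_nonneg (t^4 - t^3/4), sq_nonneg (t^3 - t^2/4), pow_nonneg h0 6]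
  nlinarith [ht3, ht5, ht7, ht9, h4, h6, h8]

private lemma polyB (t : ℝ) (h0 : 0 ≤ t) (h1 : t ≤ 1/4) :
    (1 - t/6 + t^2/120)^2 * (15 + 5*t + t^2 - 15*t^3) ≤ 15 := by
  nlinarith [sq_nonneg t, sq_nonneg (t^2), sq_nonneg (t^3), sq_nonneg (t^4), mul_nonneg h0 h0, sq_nonneg (1-t)]


private lemma key_ub (x : ℝ) (hx : 0 < x) (hx2 : x ≤ 1/2) :
    1/(Real.sin x)^2 ≤ 1/x^2 + 1/3 + x^2/15 + x^4 := by
  have hs : 0 < Real.sin x :=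
    Real.sin_pos_of_pos_of_lt_pi hx (by linarith [Real.pi_gt_three])
  have hp : x - x^3/6 + x^5/120 - x^7/5040 ≤ Real.sin x := sin_lb7 x hx.le
  have ht1 : x^2 ≤ 1/4 := by nlinarith
  have hppos : 0 < x - x^3/6 + x^5/120 - x^7/5040 := by
    nlinarith [mul_le_mul_of_nonneg_left ht1 hx.le,
      mul_le_mul_of_nonneg_left ht1 (pow_nonneg hx.le 5), pow_nonneg hx.le 5]
  have hP := polyA (x^2) (sq_nonneg x) ht1
  have step1 : 1/(Real.sin x)^2 ≤ 1/(x - x^3/6 + x^5/120 - x^7/5040)^2 := by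
    apply one_div_le_one_div_of_le (by positivity)
    nlinarith
  have step2 : 1/(x - x^3/6 + x^5/120 - x^7/5040)^2
      ≤ (15 + 5*x^2 + x^4 + 15*x^6)/(15*x^2) := by
    rw [div_le_div_iff₀ (by positivity) (by positivity)]
    nlinarith [hP, sq_nonneg x, mul_le_mul_of_nonneg_right hP (sq_nonneg x)]
  have step3 : (15 + 5*x^2 + x^4 + 15*x^6)/(15*x^2) = 1/x^2 + 1/3 + x^2/15 + x^4 := by
    field_simp
    ring
  linarith [step1, step2, step3.symm.le]

private lemma key_lb (x : ℝ) (hx : 0 < x) (hx2 : x ≤ 1/2) :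
    1/x^2 + 1/3 + x^2/15 - x^4 ≤ 1/(Real.sin x)^2 := by
  have hs : 0 < Real.sin x :=
    Real.sin_pos_of_pos_of_lt_pi hx (by linarith [Real.pi_gt_three])
  have hq : Real.sin x ≤ x - x^3/6 + x^5/120 := sin_ub5 x hx.le
  have ht1 : x^2 ≤ 1/4 := by nlinarith
  have hQ := polyB (x^2) (sq_nonneg x) ht1
  have step1 : 1/(x - x^3/6 + x^5/120)^2 ≤ 1/(Real.sin x)^2 := by
    apply one_div_le_one_div_of_le (by positivity)
    nlinarith
  have step2 : (15 + 5*x^2 + x^4 - 15*x^6)/(15*x^2) ≤ 1/(x - x^3/6 + x^5/120)^2 := by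
    have hqpos : 0 < x - x^3/6 + x^5/120 := by nlinarith
    rw [div_le_div_iff₀ (by positivity) (by positivity)]
    nlinarith [mul_le_mul_of_nonneg_right hQ (sq_nonneg x)]
  have step3 : (15 + 5*x^2 + x^4 - 15*x^6)/(15*x^2) = 1/x^2 + 1/3 + x^2/15 - x^4 := by
    field_simp
    ring
  linarith [step1, step2, step3.symm.le]

end Aux


private lemma harmonic_cast (n : ℕ) :
    (harmonic n : ℝ) = ∑ i ∈ Finset.range n, (1:ℝ)/(i+1) := by
  rw [harmonic]
  push_cast
  simp [one_div]

private lemma harmonic_le_log (n : ℕ) (hn : 1 ≤ n) :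
    (harmonic n : ℝ) ≤ 1 + Real.log n := by
  have h := Real.strictAnti_eulerMascheroniSeq'.antitone hn
  rw [Real.eulerMascheroniSeq'_one] at h
  have hne : n ≠ 0 := by omega
  simp only [Real.eulerMascheroniSeq', hne, if_false] at h
  linarith



private lemma sqrt_pert {δ : ℝ} (h : |δ| ≤ 1/2) :
    |1/Real.sqrt (1+δ) - 1 + δ/2| ≤ 3*δ^2 := by
  obtain ⟨h1, h2⟩ := abs_le.1 h
  have h1δ : (0:ℝ) < 1 + δ := by linarith
  set w := Real.sqrt (1+δ) with hw
  have hw2 : w^2 = 1+δ := Real.sq_sqrt h1δ.le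
  have hwpos : 0 < w := Real.sqrt_pos.2 h1δ
  have hwl : 7/10 ≤ w := by nlinarith
  have hδw : δ = w^2 - 1 := by linarith
  have hiden : 1/w - 1 + δ/2 = (w-1)^2*(w+2)/(2*w) := by
    rw [hδw]; field_simp; ring
  rw [hiden, hδw, abs_div, abs_of_pos (by linarith : (0:ℝ) < 2*w),
    abs_of_nonneg (by nlinarith : (0:ℝ) ≤ (w-1)^2*(w+2))]
  rw [div_le_iff₀ (by linarith)]
  nlinarith [mul_nonneg (sq_nonneg (w-1)) (show (0:ℝ) ≤ 6*w*(w+1)^2 - (w+2) by nlinarith)]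



set_option maxHeartbeats 1000000 in
/-- For the recursion `x (n+1) = sin (x n)` with `x 0 ∈ (0, π)`, the limit
`lim 2 n^{3/2} (x n / √3 - n^{-1/2} + (3/10) (log n) / n^{3/2})` exists. -/
theorem sin_iterates_refined_limit (x : ℕ → ℝ)
    (hx0 : x 0 ∈ Set.Ioo 0 Real.pi)
    (hrec : ∀ n : ℕ, x (n + 1) = Real.sin (x n)) :
    ∃ L : ℝ, Tendsto
      (fun n : ℕ => 2 * (n : ℝ) ^ ((3 : ℝ) / 2) *
        (x n / Real.sqrt 3 - (n : ℝ) ^ (-(1 : ℝ) / 2) +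
          (3 / 10) * Real.log n / (n : ℝ) ^ ((3 : ℝ) / 2)))
      atTop (nhds L) := by
  have hmem : ∀ n, 0 < x n ∧ x n < Real.pi := by
    intro n; induction n with
    | zero => exact ⟨hx0.1, hx0.2⟩
    | succ n ih =>
      rw [hrec n]
      refine ⟨Real.sin_pos_of_pos_of_lt_pi ih.1 ih.2, ?_⟩
      exact lt_of_le_of_lt (Real.sin_le_one _) (by linarith [Real.pi_gt_three])
  have hpos : ∀ n, 0 < x n := fun n => (hmem n).1
  -- x tends to 0
  have hanti : Antitone (fun n => x (n + 1)) := by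
    apply antitone_nat_of_succ_le
    intro n
    rw [hrec (n+1)]
    exact (Real.sin_lt (hpos (n+1))).le
  have hbdd : BddBelow (Set.range fun n => x (n + 1)) := by
    refine ⟨0, ?_⟩
    rintro v ⟨n, rfl⟩
    exact (hpos (n+1)).le
  have hconv := tendsto_atTop_ciInf hanti hbdd
  set l := ⨅ n, x (n + 1) with hl
  have hl0 : 0 ≤ l := le_ciInf fun n => (hpos (n+1)).le
  have h1 : Tendsto (fun n => x (n + 1 + 1)) atTop (𝓝 l) :=
    hconv.comp (tendsto_add_atTop_nat 1)
  have h1' : Tendsto (fun n => Real.sin (x (n+1))) atTop (𝓝 l) :=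
    h1.congr fun n => hrec (n+1)
  have h2 : Tendsto (fun n => Real.sin (x (n+1))) atTop (𝓝 (Real.sin l)) :=
    (Real.continuous_sin.tendsto l).comp hconv
  have hfix : l = Real.sin l := tendsto_nhds_unique h1' h2
  have hlz : l = 0 := by
    by_contra h
    have hlpos : 0 < l := lt_of_le_of_ne hl0 (Ne.symm h)
    have := Real.sin_lt hlpos
    linarith
  have htend0 : Tendsto x atTop (𝓝 0) := by
    rw [← tendsto_add_atTop_iff_nat 1]
    rwa [hlz] at hconv
  set y : ℕ → ℝ := fun n => 1/(x n)^2 with hy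
  have hydef : ∀ n, y n = 1/(x n)^2 := fun n => rfl
  -- eventually x n ≤ 1/2
  obtain ⟨N₀, hN₀⟩ : ∃ N, ∀ n ≥ N, x n ≤ 1/2 := by
    have := htend0.eventually (eventually_le_nhds (show (0:ℝ) < 1/2 by norm_num))
    exact eventually_atTop.1 this
  -- increment bounds
  have hyd : ∀ n, N₀ ≤ n → |y (n+1) - y n - 1/3 - (x n)^2/15| ≤ (x n)^4 := by
    intro n hn
    have h1 := key_ub (x n) (hpos n) (hN₀ n hn)
    have h2 := key_lb (x n) (hpos n) (hN₀ n hn)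
    have hyn1 : y (n+1) = 1/(Real.sin (x n))^2 := by simp only [hy]; rw [hrec n]
    rw [abs_le]
    constructor <;> simp only [hy] at hyn1 ⊢ <;> rw [hyn1] <;> linarith
  have hx2 : Tendsto (fun n => (x n)^2) atTop (𝓝 0) := by
    have := htend0.pow 2; simpa using this
  have hx4 : Tendsto (fun n => (x n)^4) atTop (𝓝 0) := by
    have := htend0.pow 4; simpa using this
  -- y (n+1) - y n → 1/3
  have hy13 : Tendsto (fun n => y (n+1) - y n) atTop (𝓝 (1/3)) := by
    refine tendsto_of_tendsto_of_tendsto_of_le_of_le'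
      (g := fun n => 1/3 + (x n)^2/15 - (x n)^4)
      (h := fun n => 1/3 + (x n)^2/15 + (x n)^4) ?_ ?_ ?_ ?_
    · have : Tendsto (fun n => 1/3 + (x n)^2/15 - (x n)^4) atTop (𝓝 (1/3 + 0/15 - 0)) :=
        ((tendsto_const_nhds.add (hx2.div_const 15)).sub hx4)
      simpa using this
    · have : Tendsto (fun n => 1/3 + (x n)^2/15 + (x n)^4) atTop (𝓝 (1/3 + 0/15 + 0)) :=
        ((tendsto_const_nhds.add (hx2.div_const 15)).add hx4)
      simpa using this
    · filter_upwards [eventually_ge_atTop N₀] with n hn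
      have := abs_le.1 (hyd n hn); linarith [this.1]
    · filter_upwards [eventually_ge_atTop N₀] with n hn
      have := abs_le.1 (hyd n hn); linarith [(abs_le.1 (hyd n hn)).2]
  -- Cesàro: y n / n → 1/3
  have hces := hy13.cesaro
  have hces2 : Tendsto (fun n : ℕ => (y n - y 0) / n) atTop (𝓝 (1/3)) := by
    apply hces.congr
    intro n
    rw [Finset.sum_range_sub (f := y)]
    ring
  have hyn : Tendsto (fun n : ℕ => y n / n) atTop (𝓝 (1/3)) := by
    have h0 : Tendsto (fun n : ℕ => y 0 * (1/(n:ℝ))) atTop (𝓝 (y 0 * 0)) :=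
      tendsto_const_nhds.mul tendsto_one_div_atTop_nhds_zero_nat
    have := hces2.add h0
    rw [show (1:ℝ)/3 + y 0 * 0 = 1/3 by ring] at this
    apply this.congr'
    filter_upwards [eventually_gt_atTop 0] with n hn
    have : (n:ℝ) ≠ 0 := Nat.cast_ne_zero.2 hn.ne'
    field_simp
    ring
  -- n * (x n)^2 → 3
  have hnx2 : Tendsto (fun n : ℕ => (n:ℝ) * (x n)^2) atTop (𝓝 3) := by
    have hinv : Tendsto (fun n : ℕ => (y n / n)⁻¹) atTop (𝓝 ((1/3:ℝ))⁻¹) :=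
      hyn.inv₀ (by norm_num)
    rw [show ((1/3:ℝ))⁻¹ = 3 by norm_num] at hinv
    apply hinv.congr'
    filter_upwards [eventually_gt_atTop 0] with n hn
    have hne : (n:ℝ) ≠ 0 := Nat.cast_ne_zero.2 hn.ne'
    have hxne : x n ≠ 0 := (hpos n).ne'
    simp only [hy]
    field_simp
  obtain ⟨N₁, hN₁⟩ : ∃ N : ℕ, ∀ n : ℕ, n ≥ N → 2 ≤ (n:ℝ)*(x n)^2 ∧ (n:ℝ)*(x n)^2 ≤ 4 := by
    have h2 := hnx2.eventually (eventually_ge_nhds (show (2:ℝ) < 3 by norm_num))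
    have h4 := hnx2.eventually (eventually_le_nhds (show (3:ℝ) < 4 by norm_num))
    exact eventually_atTop.1 (h2.and h4)
  set N := max N₁ (max N₀ 1) with hN
  have hNN₀ : N₀ ≤ N := le_trans (le_max_left _ _) (le_max_right _ _)
  have hN1 : 1 ≤ N := le_trans (le_max_right _ _) (le_max_right _ _)
  have hfacts : ∀ n, N ≤ n → (1:ℝ) ≤ n ∧ (n:ℝ)/4 ≤ y n ∧ y n ≤ (n:ℝ)/2
      ∧ (x n)^2 ≤ 4/(n:ℝ) ∧ (x n)^4 ≤ 16/(n:ℝ)^2 := by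
    intro n hn
    have hn1 : (1:ℝ) ≤ (n:ℝ) := by exact_mod_cast le_trans hN1 hn
    have hnpos : (0:ℝ) < n := by linarith
    obtain ⟨hl, hu⟩ := hN₁ n (le_trans (le_max_left _ _) hn)
    have hx2pos : 0 < (x n)^2 := pow_pos (hpos n) 2
    have hxu : (x n)^2 ≤ 4/(n:ℝ) := by rw [le_div_iff₀ hnpos]; linarith
    have hxl : 2/(n:ℝ) ≤ (x n)^2 := by rw [div_le_iff₀ hnpos]; linarith
    refine ⟨hn1, ?_, ?_, hxu, ?_⟩
    · rw [hydef n]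
      have := one_div_le_one_div_of_le hx2pos hxu
      rwa [one_div_div] at this
    · rw [hydef n]
      have h2n : (0:ℝ) < 2/(n:ℝ) := by positivity
      have := one_div_le_one_div_of_le h2n hxl
      rwa [one_div_div] at this
    · have := pow_le_pow_left₀ (sq_nonneg (x n)) hxu 2
      calc (x n)^4 = ((x n)^2)^2 := by ring
        _ ≤ (4/(n:ℝ))^2 := this
        _ = 16/(n:ℝ)^2 := by rw [div_pow]; norm_num
  -- increment bound 17/k
  have hdk : ∀ k, N ≤ k → |y (k+1) - y k - 1/3| ≤ 17/(k:ℝ) := by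
    intro k hk
    obtain ⟨hk1, _, _, hx2u, hx4u⟩ := hfacts k hk
    have hkpos : (0:ℝ) < k := by linarith
    have h := hyd k (le_trans hNN₀ hk)
    have habs := abs_le.1 h
    rw [abs_le]
    have h16 : 16/(k:ℝ)^2 ≤ 16/(k:ℝ) := by
      apply div_le_div_of_nonneg_left (by norm_num) hkpos
      nlinarith
    have hx15 : (x k)^2/15 ≤ (4/(k:ℝ))/15 := by linarith
    have hda : 4/((k:ℝ))/15 + 16/(k:ℝ) ≤ 17/(k:ℝ) := by
      rw [div_div, div_add_div _ _ (by positivity) (by positivity),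
        div_le_div_iff₀ (by positivity) (by positivity)]
      ring_nf
      nlinarith
    have hxx : (0:ℝ) < (x k)^2 := pow_pos (hpos k) 2
    constructor
    · nlinarith [habs.1]
    · nlinarith [habs.2]
  -- telescoping identity
  have htel : ∀ n, N ≤ n → y n - (n:ℝ)/3
      = (y N - (N:ℝ)/3) + ∑ k ∈ Finset.Ico N n, (y (k+1) - y k - 1/3) := by
    intro n hn
    have h1 : ∑ k ∈ Finset.Ico N n, (y (k+1) - y k) = y n - y N := by
      rw [Finset.sum_Ico_eq_sub _ hn, Finset.sum_range_sub (f := y),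
        Finset.sum_range_sub (f := y)]
      ring
    have h2 : ∑ k ∈ Finset.Ico N n, (1/3:ℝ) = ((n:ℝ) - N)/3 := by
      rw [Finset.sum_const, Nat.card_Ico, nsmul_eq_mul, Nat.cast_sub hn]
      ring
    have h3 : ∑ k ∈ Finset.Ico N n, (y (k+1) - y k - 1/3)
        = (y n - y N) - ((n:ℝ) - N)/3 := by
      rw [Finset.sum_sub_distrib, h1, h2]
    rw [h3]; ring
  -- log bound
  obtain ⟨C, hC⟩ : ∃ C : ℝ, C = |y N - (N:ℝ)/3| + 34 := ⟨_, rfl⟩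
  have hClog : ∀ n, N ≤ n → |y n - (n:ℝ)/3| ≤ C * (1 + Real.log n) := by
    intro n hn
    obtain ⟨hn1, _, _, _, _⟩ := hfacts n hn
    have hlogn : 0 ≤ Real.log n := Real.log_nonneg hn1
    have hsum : |∑ k ∈ Finset.Ico N n, (y (k+1) - y k - 1/3)| ≤ 34 * (1 + Real.log n) := by
      calc |∑ k ∈ Finset.Ico N n, (y (k+1) - y k - 1/3)|
          ≤ ∑ k ∈ Finset.Ico N n, |y (k+1) - y k - 1/3| := Finset.abs_sum_le_sum_abs _ _
        _ ≤ ∑ k ∈ Finset.Ico N n, 34/((k:ℝ)+1) := by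
            apply Finset.sum_le_sum
            intro k hk
            have hkN : N ≤ k := (Finset.mem_Ico.1 hk).1
            have hk1 : (1:ℝ) ≤ (k:ℝ) := (hfacts k hkN).1
            have := hdk k hkN
            have : |y (k+1) - y k - 1/3| ≤ 17/(k:ℝ) := this
            have h2 : 17/(k:ℝ) ≤ 34/((k:ℝ)+1) := by
              rw [div_le_div_iff₀ (by linarith) (by linarith)]
              linarith
            linarith
        _ ≤ ∑ k ∈ Finset.range n, 34/((k:ℝ)+1) := by
            apply Finset.sum_le_sum_of_subset_of_nonneg
            · intro k hk
              exact Finset.mem_range.2 (Finset.mem_Ico.1 hk).2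
            · intro k _ _
              positivity
        _ = 34 * ∑ k ∈ Finset.range n, (1:ℝ)/((k:ℝ)+1) := by
            rw [Finset.mul_sum]
            apply Finset.sum_congr rfl
            intro k _
            ring
        _ = 34 * (harmonic n : ℝ) := by rw [harmonic_cast]
        _ ≤ 34 * (1 + Real.log n) := by
            have := harmonic_le_log n (by exact_mod_cast le_trans hN1 hn)
            linarith
    rw [htel n hn]
    calc |y N - (N:ℝ)/3 + ∑ k ∈ Finset.Ico N n, (y (k+1) - y k - 1/3)|
        ≤ |y N - (N:ℝ)/3| + |∑ k ∈ Finset.Ico N n, (y (k+1) - y k - 1/3)| := abs_add_le _ _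
      _ ≤ |y N - (N:ℝ)/3| + 34 * (1 + Real.log n) := by linarith
      _ ≤ C * (1 + Real.log n) := by
          rw [hC]
          nlinarith [abs_nonneg (y N - (N:ℝ)/3)]
  have hyd' : ∀ n, N ≤ n → |y (n+1) - y n - 1/3 - (x n)^2/15| ≤ (x n)^4 :=
    fun n hn => hyd n (le_trans hNN₀ hn)
  have hCpos : (34:ℝ) ≤ C := by
    rw [hC]; linarith [abs_nonneg (y N - (N:ℝ)/3)]
  obtain ⟨A, hA⟩ : ∃ A : ℝ, Tendsto (fun n : ℕ => y n - (n:ℝ)/3 - (1/5)*Real.log n) atTop (𝓝 A) := by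
    set d : ℕ → ℝ := fun n => y (n+1) - y n - 1/3 - 1/(5*((n:ℝ)+1)) with hd
    set C₂ : ℝ := 17 + 3*C with hC₂
    -- pointwise bound on |d n|
    have hdb : ∀ n, N ≤ n → |d n| ≤ 2*C₂ * ((n:ℝ)^((3:ℝ)/2))⁻¹ := by
      intro n hn
      obtain ⟨hn1, hyl, hyu, hx2u, hx4u⟩ := hfacts n hn
      have hnpos : (0:ℝ) < n := by linarith
      have hlog0 : 0 ≤ Real.log n := Real.log_nonneg hn1
      have hypos : 0 < y n := by linarith [hyl]
      -- |x n ^2/15 - 1/(5(n+1))| ≤ (1+3C)(1+log n)/n^2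
      have hxy : (x n)^2 = 1/(y n) := by
        rw [hydef n, one_div_one_div]
      have hiden : (x n)^2/15 - 1/(5*((n:ℝ)+1))
          = ((n:ℝ)+1 - 3*(y n))/(15*(y n)*((n:ℝ)+1)) := by
        rw [hxy]
        field_simp
        ring
      have hnum : |(n:ℝ)+1 - 3*(y n)| ≤ (1+3*C)*(1 + Real.log n) := by
        have h1 := hClog n hn
        have habs := abs_le.1 h1
        have hC0 : (0:ℝ) ≤ C := by linarith
        have hCL : 0 ≤ C * Real.log (n:ℝ) := mul_nonneg hC0 hlog0
        rw [abs_le]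
        constructor
        · nlinarith [habs.1, habs.2, hCL, hlog0]
        · nlinarith [habs.1, habs.2, hCL, hlog0]
      have hden : (n:ℝ)^2 ≤ 15*(y n)*((n:ℝ)+1) := by nlinarith
      have hBpos : (0:ℝ) < 15*(y n)*((n:ℝ)+1) := by nlinarith
      have hmid : |(x n)^2/15 - 1/(5*((n:ℝ)+1))| ≤ (1+3*C)*(1 + Real.log n)/(n:ℝ)^2 := by
        rw [hiden, abs_div, abs_of_pos hBpos]
        apply div_le_div₀ (by positivity) hnum (by positivity) hden
      -- main increment bound
      have h1 := abs_le.1 (hyd' n hn)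
      have hd1 : |d n| ≤ (x n)^4 + |(x n)^2/15 - 1/(5*((n:ℝ)+1))| := by
        have hsplit : d n = (y (n+1) - y n - 1/3 - (x n)^2/15)
            + ((x n)^2/15 - 1/(5*((n:ℝ)+1))) := by simp only [hd]; ring
        rw [hsplit]
        exact le_trans (abs_add_le _ _) (add_le_add (hyd' n hn) le_rfl)
      have hd2 : |d n| ≤ C₂*(1 + Real.log n)/(n:ℝ)^2 := by
        have h16 : (x n)^4 ≤ 16*(1 + Real.log n)/(n:ℝ)^2 := by
          calc (x n)^4 ≤ 16/(n:ℝ)^2 := hx4u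
            _ ≤ 16*(1 + Real.log n)/(n:ℝ)^2 := by
                apply div_le_div_of_nonneg_right ?_ (by positivity)
                · nlinarith
        calc |d n| ≤ (x n)^4 + |(x n)^2/15 - 1/(5*((n:ℝ)+1))| := hd1
          _ ≤ 16*(1 + Real.log n)/(n:ℝ)^2 + (1+3*C)*(1 + Real.log n)/(n:ℝ)^2 := by
              linarith [hmid]
          _ = C₂*(1 + Real.log n)/(n:ℝ)^2 := by rw [hC₂]; ring
      -- 1 + log n ≤ 2 sqrt n
      have hlogsqrt : 1 + Real.log n ≤ 2*Real.sqrt n := by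
        have hs : Real.log (Real.sqrt n) ≤ Real.sqrt n - 1 :=
          Real.log_le_sub_one_of_pos (Real.sqrt_pos.2 hnpos)
        rw [Real.log_sqrt hnpos.le] at hs
        linarith
      have hsqrtdiv : Real.sqrt n / (n:ℝ)^2 = ((n:ℝ)^((3:ℝ)/2))⁻¹ := by
        rw [Real.sqrt_eq_rpow, ← Real.rpow_natCast (n:ℝ) 2, ← Real.rpow_sub hnpos,
          ← Real.rpow_neg hnpos.le]
        norm_num
      calc |d n| ≤ C₂*(1 + Real.log n)/(n:ℝ)^2 := hd2
        _ ≤ C₂*(2*Real.sqrt n)/(n:ℝ)^2 := by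
            have hC₂0 : 0 ≤ C₂ := by rw [hC₂]; linarith
            gcongr
        _ = 2*C₂ * (Real.sqrt n / (n:ℝ)^2) := by ring
        _ = 2*C₂ * ((n:ℝ)^((3:ℝ)/2))⁻¹ := by rw [hsqrtdiv]
    -- summability of d
    have hsum32 : Summable (fun n : ℕ => ((n:ℝ)^((3:ℝ)/2))⁻¹) :=
      Real.summable_nat_rpow_inv.2 (by norm_num)
    have hdsummable : Summable d := by
      rw [← summable_nat_add_iff N]
      apply Summable.of_abs
      exact Summable.of_nonneg_of_le (fun n => abs_nonneg _)
        (fun n => hdb (n+N) (Nat.le_add_left N n))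
        (((summable_nat_add_iff N).2 hsum32).mul_left _)
    -- S converges
    set S : ℕ → ℝ := fun n => y n - (n:ℝ)/3 - (1/5)*(harmonic n : ℝ) with hS
    have hSd : ∀ n, S (n+1) - S n = d n := by
      intro n
      simp only [hS, hd, harmonic_succ]
      push_cast
      field_simp
      ring
    have hStend : Tendsto S atTop (𝓝 (S 0 + ∑' n, d n)) := by
      have hps := hdsummable.hasSum.tendsto_sum_nat
      have : Tendsto (fun n => S 0 + ∑ i ∈ Finset.range n, d i) atTop (𝓝 (S 0 + ∑' n, d n)) :=
        tendsto_const_nhds.add hps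
      apply this.congr
      intro n
      have : ∑ i ∈ Finset.range n, d i = S n - S 0 := by
        rw [← Finset.sum_range_sub (f := S)]
        exact Finset.sum_congr rfl fun i _ => (hSd i).symm
      rw [this]; ring
    -- combine with harmonic - log → γ
    refine ⟨S 0 + ∑' n, d n + (1/5)*Real.eulerMascheroniConstant, ?_⟩
    have hγ := Real.tendsto_harmonic_sub_log.const_mul (1/5)
    have := hStend.add hγ
    apply this.congr
    intro n
    simp only [hS]
    ring
  set δ : ℕ → ℝ := fun n => (3*y n - (n:ℝ))/n with hδdef
  set r : ℕ → ℝ := fun n => 1/Real.sqrt (1 + δ n) - 1 + δ n/2 with hrdef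
  -- (3 y n - n) - (3/5) log n → 3A
  have hglog : Tendsto (fun n : ℕ => (3*y n - (n:ℝ)) - (3/5)*Real.log n) atTop (𝓝 (3*A)) := by
    have := hA.const_mul 3
    apply this.congr
    intro n; ring
  -- sqrt n → ∞
  have hsqrt_atTop : Tendsto (fun n : ℕ => Real.sqrt n) atTop atTop := by
    have := (tendsto_rpow_atTop (show (0:ℝ) < 1/2 by norm_num)).comp
      (tendsto_natCast_atTop_atTop (R := ℝ))
    apply this.congr
    intro n
    simp [Function.comp, Real.sqrt_eq_rpow]
  -- log n / sqrt n → 0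
  have hlogdiv : Tendsto (fun n : ℕ => Real.log n / Real.sqrt n) atTop (𝓝 0) := by
    have h := (isLittleO_log_rpow_atTop (show (0:ℝ) < 1/2 by norm_num)).tendsto_div_nhds_zero
    have h2 := h.comp (tendsto_natCast_atTop_atTop (R := ℝ))
    apply h2.congr'
    filter_upwards [eventually_ge_atTop 1] with n hn
    have : (0:ℝ) ≤ n := by positivity
    simp [Function.comp, Real.sqrt_eq_rpow]
  -- (3 y n - n)/sqrt n → 0
  have hgdivsqrt : Tendsto (fun n : ℕ => (3*y n - (n:ℝ))/Real.sqrt n) atTop (𝓝 0) := by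
    have h1 : Tendsto (fun n : ℕ => ((3*y n - (n:ℝ)) - (3/5)*Real.log n)/Real.sqrt n)
        atTop (𝓝 0) := hglog.div_atTop hsqrt_atTop
    have h2 := h1.add (hlogdiv.const_mul (3/5))
    rw [show (0:ℝ) + 3/5*0 = 0 by norm_num] at h2
    apply h2.congr'
    filter_upwards [eventually_ge_atTop 1] with n hn
    have hs : Real.sqrt n ≠ 0 := by
      refine ne_of_gt (Real.sqrt_pos.2 ?_)
      exact_mod_cast Nat.pos_of_ne_zero (by omega)
    field_simp
    ring
  -- (3 y n - n)^2/n → 0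
  have hgsq : Tendsto (fun n : ℕ => (3*y n - (n:ℝ))^2/(n:ℝ)) atTop (𝓝 0) := by
    have := hgdivsqrt.mul hgdivsqrt
    rw [mul_zero (0:ℝ)] at this
    apply this.congr'
    filter_upwards [eventually_ge_atTop 1] with n hn
    have hn0 : (0:ℝ) < n := by exact_mod_cast Nat.pos_of_ne_zero (by omega)
    rw [div_mul_div_comm, Real.mul_self_sqrt hn0.le]
    ring_nf
  -- δ n → 0
  have hδ0 : Tendsto δ atTop (𝓝 0) := by
    have h1 : Tendsto (fun n : ℕ => ((3*y n - (n:ℝ))/Real.sqrt n)/Real.sqrt n)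
        atTop (𝓝 0) := hgdivsqrt.div_atTop hsqrt_atTop
    apply h1.congr'
    filter_upwards [eventually_ge_atTop 1] with n hn
    have hn0 : (0:ℝ) < n := by exact_mod_cast Nat.pos_of_ne_zero (by omega)
    simp only [hδdef]
    rw [div_div, Real.mul_self_sqrt hn0.le]
  have hδsmall : ∀ᶠ n in atTop, |δ n| ≤ 1/2 := by
    have habs : Tendsto (fun n => |δ n|) atTop (𝓝 0) := by
      have := hδ0.abs; simpa using this
    exact habs.eventually (eventually_le_nhds (by norm_num))
  -- r bound
  have hrb : ∀ᶠ n : ℕ in atTop, ‖2*(n:ℝ)*(r n)‖ ≤ 6*((3*y n - (n:ℝ))^2/(n:ℝ)) := by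
    filter_upwards [hδsmall, eventually_ge_atTop 1] with n hδn hn
    have hn0 : (0:ℝ) < n := by exact_mod_cast Nat.pos_of_ne_zero (by omega)
    have hr := sqrt_pert hδn
    rw [Real.norm_eq_abs, abs_mul, abs_of_nonneg (by positivity : (0:ℝ) ≤ 2*(n:ℝ))]
    have hδsq : (n:ℝ)*(δ n)^2 = (3*y n - (n:ℝ))^2/(n:ℝ) := by
      simp only [hδdef]
      field_simp
    calc 2*(n:ℝ)*|r n| ≤ 2*(n:ℝ)*(3*(δ n)^2) := by
          apply mul_le_mul_of_nonneg_left hr (by positivity)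
      _ = 6*((n:ℝ)*(δ n)^2) := by ring
      _ = 6*((3*y n - (n:ℝ))^2/(n:ℝ)) := by rw [hδsq]
  have htwo : Tendsto (fun n : ℕ => 2*(n:ℝ)*(r n)) atTop (𝓝 0) := by
    apply squeeze_zero_norm' hrb
    have := hgsq.const_mul 6
    simpa using this
  -- assemble
  refine ⟨-(3*A), ?_⟩
  have hfinal := (hglog.neg).add htwo
  rw [add_zero] at hfinal
  apply hfinal.congr'
  filter_upwards [eventually_ge_atTop (max N 1)] with n hn
  have hnN : N ≤ n := le_trans (le_max_left _ _) hn
  have hn1 : 1 ≤ n := le_trans (le_max_right _ _) hn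
  obtain ⟨hn1R, hyl, hyu, -, -⟩ := hfacts n hnN
  have hnpos : (0:ℝ) < n := by linarith
  have hypos : 0 < y n := by linarith
  have hxpos := hpos n
  -- auxiliary quantities
  have hs0 : (0:ℝ) < Real.sqrt n := Real.sqrt_pos.2 hnpos
  have h1δ : 1 + δ n = 3*(y n)/(n:ℝ) := by
    simp only [hδdef]; field_simp; ring
  have h1δpos : (0:ℝ) < 1 + δ n := by rw [h1δ]; positivity
  have hw0 : (0:ℝ) < Real.sqrt (1 + δ n) := Real.sqrt_pos.2 h1δpos
  have ht3 : (0:ℝ) < Real.sqrt 3 := Real.sqrt_pos.2 (by norm_num)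
  have hu0 : (0:ℝ) < Real.sqrt (y n) := Real.sqrt_pos.2 hypos
  -- x n = 1/sqrt (y n)
  have hxu : x n = 1/Real.sqrt (y n) := by
    rw [hydef n, one_div (x n^2), Real.sqrt_inv, Real.sqrt_sq hxpos.le, one_div, inv_inv]
  -- sqrt3 * sqrt(y n) = sqrt n * sqrt (1+δ)
  have hkey : Real.sqrt 3 * Real.sqrt (y n) = Real.sqrt n * Real.sqrt (1 + δ n) := by
    rw [← Real.sqrt_mul (by norm_num : (0:ℝ) ≤ 3), ← Real.sqrt_mul hnpos.le]
    congr 1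
    rw [h1δ]
    field_simp
  -- rpow conversions
  have h32 : (n:ℝ)^((3:ℝ)/2) = (n:ℝ) * Real.sqrt n := by
    rw [show (3:ℝ)/2 = 1 + 1/2 by norm_num, Real.rpow_add hnpos, Real.rpow_one,
      Real.sqrt_eq_rpow]
  have hneg : (n:ℝ)^(-(1:ℝ)/2) = 1/Real.sqrt n := by
    rw [show -(1:ℝ)/2 = -(1/2) by norm_num, Real.rpow_neg hnpos.le, Real.sqrt_eq_rpow,
      one_div]
    norm_num
  -- x n / sqrt 3 = 1/(sqrt n * sqrt (1+δ))
  have hx3 : x n / Real.sqrt 3 = 1/(Real.sqrt n * Real.sqrt (1 + δ n)) := by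
    rw [hxu, ← hkey]
    field_simp
  have hnδ : 3*(y n) - (n:ℝ) = (n:ℝ) * δ n := by
    simp only [hδdef]; field_simp
  -- final algebraic identity
  rw [h32, hneg, hx3]
  simp only [hrdef]
  rw [hnδ]
  field_simp
  ring
end

section
/- Let y₀ > 0 and define yₙ = yₙ₋₁/(1 + yₙ₋₁²) for n ≥ 1. Then the limit limₙ→∞ 2n^{3/2}·(√2·yₙ − n^{−1/2} + (1/8)·(log n)/n^{3/2}) exists as a real number. -/
open Filter Finset Topology

set_option maxHeartbeats 1000000 in
/-- For the recursion `y (n+1) = y n / (1 + (y n)²)` with `y 0 > 0`, the limit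
`lim 2 n^{3/2} (√2 y n - n^{-1/2} + (1/8) (log n) / n^{3/2})` exists. -/
theorem rational_map_iterates_refined_limit (y : ℕ → ℝ)
    (hy0 : y 0 > 0)
    (hrec : ∀ n : ℕ, y (n + 1) = y n / (1 + y n ^ 2)) :
    ∃ L : ℝ, Tendsto
      (fun n : ℕ => 2 * (n : ℝ) ^ ((3 : ℝ) / 2) *
        (Real.sqrt 2 * y n - (n : ℝ) ^ (-(1 : ℝ) / 2) +
          (1 / 8) * Real.log n / (n : ℝ) ^ ((3 : ℝ) / 2)))
      atTop (nhds L) := by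
  -- positivity of the orbit
  have hy : ∀ n, 0 < y n := by
    intro n; induction n with
    | zero => exact hy0
    | succ n ih => rw [hrec]; positivity
  -- the auxiliary sequence `u n = 1 / (y n)^2`
  set u : ℕ → ℝ := fun n => 1 / (y n)^2 with hudef
  have hupos : ∀ n, 0 < u n := by intro n; have := hy n; positivity
  have hu0 := hupos 0
  have hurec : ∀ n, u (n+1) = u n + 2 + 1/u n := by
    intro n
    have h1 := hy n
    have h2 : (0:ℝ) < 1 + y n ^ 2 := by positivity
    simp only [hudef, hrec n]
    field_simp
    ring
  have hlow : ∀ n : ℕ, u 0 + 2*n ≤ u n := by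
    intro n; induction n with
    | zero => simp
    | succ n ih =>
      have h1 : 0 < 1/u n := by have := hupos n; positivity
      rw [hurec n]; push_cast at ih ⊢; linarith
  have husum : ∀ n : ℕ, u n = u 0 + 2*n + ∑ k ∈ Finset.range n, 1/u k := by
    intro n; induction n with
    | zero => simp
    | succ n ih => rw [hurec n, Finset.sum_range_succ, ih]; push_cast; ring
  -- elementary logarithmic increment bounds
  have hlog_lb : ∀ k : ℕ, 1 ≤ k → 1/((k:ℝ)+1) ≤ Real.log (k+1) - Real.log k := by
    intro k hk
    have hk0 : (0:ℝ) < k := by exact_mod_cast hk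
    have hx : (0:ℝ) < ((k:ℝ)+1)/k := by positivity
    have h1 := Real.one_sub_inv_le_log_of_pos hx
    rw [Real.log_div (by positivity) (by positivity)] at h1
    have h2 : 1 - (((k:ℝ)+1)/k)⁻¹ = 1/((k:ℝ)+1) := by field_simp; ring
    rw [h2] at h1
    exact h1
  have hlog_ub : ∀ k : ℕ, 1 ≤ k → Real.log (k+1) - Real.log k ≤ 1/(k:ℝ) := by
    intro k hk
    have hk0 : (0:ℝ) < k := by exact_mod_cast hk
    have hx : (0:ℝ) < ((k:ℝ)+1)/k := by positivity
    have h1 := Real.log_le_sub_one_of_pos hx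
    rw [Real.log_div (by positivity) (by positivity)] at h1
    have h2 : ((k:ℝ)+1)/k - 1 = 1/(k:ℝ) := by field_simp; ring
    linarith [h2 ▸ h1]
  have hinv : ∀ k : ℕ, 1 ≤ k → 1/u k ≤ 1/(2*(k:ℝ)) := by
    intro k hk
    have hk0 : (0:ℝ) < k := by exact_mod_cast hk
    apply one_div_le_one_div_of_le (by positivity)
    have := hlow k; linarith
  -- logarithmic bound on the partial sums of `1/u`
  have hS : ∀ n : ℕ, ∑ k ∈ Finset.range (n+1), 1/u k ≤ 1/u 0 + Real.log (n+1) := by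
    intro n; induction n with
    | zero => simp
    | succ n ih =>
      rw [Finset.sum_range_succ]
      have h1 := hinv (n+1) (by omega)
      have h2 := hlog_lb (n+1) (by omega)
      have hn0 : (0:ℝ) < ((n:ℕ):ℝ)+1 := by positivity
      have h3 : 1/(2*(((n:ℕ):ℝ)+1)) ≤ 1/((((n:ℕ):ℝ)+1)+1) := by
        apply one_div_le_one_div_of_le (by positivity)
        linarith
      push_cast at h1 h2 ih h3 ⊢
      linarith
  set B : ℝ := u 0 + 1/u 0 with hBdef
  have hB2 : 0 < B := by positivity
  set v : ℕ → ℝ := fun n => u n - 2*n with hvdef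
  have hvpos : ∀ n, u 0 ≤ v n := by
    intro n; have := hlow n; simp only [hvdef]; linarith
  have hvle : ∀ n : ℕ, 1 ≤ n → v n ≤ B + Real.log n := by
    intro n hn
    obtain ⟨m, rfl⟩ : ∃ m, n = m + 1 := ⟨n-1, by omega⟩
    have h1 := hS m
    have h2 := husum (m+1)
    simp only [hvdef, hBdef]
    push_cast at h1 h2 ⊢
    linarith
  -- the telescoping comparison sequence
  set a : ℕ → ℝ := fun k => (1/2)*(Real.log (k+1) - Real.log k) with hadef
  have hasum : ∀ n : ℕ, ∑ k ∈ Finset.range n, a k = (1/2)*Real.log n := by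
    intro n
    have h := Finset.sum_range_sub (fun k : ℕ => (1/2)*Real.log k) n
    have : ∀ k ∈ Finset.range n, a k =
        (1/2)*Real.log ((k:ℕ)+1:ℕ) - (1/2)*Real.log k := by
      intro k _; simp only [hadef]; push_cast; ring
    rw [Finset.sum_congr rfl this, h]
    simp [Real.log_zero]
  set f : ℕ → ℝ := fun k => 1/u k - a k with hfdef
  -- the summable error term
  have hfb : ∀ k : ℕ, 1 ≤ k → |f k| ≤ ((B+4)/4) * (k:ℝ)^(-(3:ℝ)/2) := by
    intro k hk
    have hk0 : (0:ℝ) < k := by exact_mod_cast hk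
    have hk1 : (1:ℝ) ≤ k := by exact_mod_cast hk
    have huk := hupos k
    have hukl := hlow k
    have t1 : |1/u k - 1/(2*(k:ℝ))| ≤ (B + Real.log k)/(4*(k:ℝ)^2) := by
      have hd : 1/(2*(k:ℝ)) - 1/u k = (u k - 2*k)/(2*k*u k) := by field_simp
      have hv1 : u k - 2*k ≤ B + Real.log k := hvle k hk
      have hv0 : 0 ≤ u k - 2*k := by linarith
      rw [abs_sub_comm, hd, abs_of_nonneg (by positivity)]
      rw [div_le_div_iff₀ (by positivity) (by positivity)]
      have h2k : 2*(k:ℝ) ≤ u k := by linarith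
      have hlogk : 0 ≤ Real.log k := Real.log_nonneg hk1
      nlinarith [mul_le_mul hv1 h2k (by positivity) (by positivity)]
    have t2 : |1/(2*(k:ℝ)) - a k| ≤ 1/(2*(k:ℝ)^2) := by
      have hub : a k ≤ 1/(2*(k:ℝ)) := by
        have h := hlog_ub k hk
        simp only [hadef]
        calc (1/2)*(Real.log ((k:ℝ)+1) - Real.log k) ≤ (1/2)*(1/(k:ℝ)) := by linarith
          _ = 1/(2*(k:ℝ)) := by ring
      have hlb : 1/(2*((k:ℝ)+1)) ≤ a k := by
        have h := hlog_lb k hk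
        simp only [hadef]
        calc 1/(2*((k:ℝ)+1)) = (1/2)*(1/((k:ℝ)+1)) := by field_simp
          _ ≤ (1/2)*(Real.log ((k:ℝ)+1) - Real.log k) := by linarith
      rw [abs_of_nonneg (by linarith)]
      have : 1/(2*(k:ℝ)) - 1/(2*((k:ℝ)+1)) ≤ 1/(2*(k:ℝ)^2) := by
        rw [div_sub_div _ _ (by positivity) (by positivity),
          div_le_div_iff₀ (by positivity) (by positivity)]
        nlinarith
      linarith
    have habs : |f k| ≤ (B + 2 + Real.log k)/(4*(k:ℝ)^2) := by
      have h := abs_sub_le (1/u k) (1/(2*(k:ℝ))) (a k)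
      simp only [hfdef]
      calc |1/u k - a k| ≤ |1/u k - 1/(2*(k:ℝ))| + |1/(2*(k:ℝ)) - a k| := h
        _ ≤ (B + Real.log k)/(4*(k:ℝ)^2) + 1/(2*(k:ℝ)^2) := by linarith
        _ = (B + 2 + Real.log k)/(4*(k:ℝ)^2) := by field_simp; ring
    have hk32 : (k:ℝ)^(-(3:ℝ)/2) = ((k:ℝ) * Real.sqrt k)⁻¹ := by
      rw [show (-(3:ℝ)/2) = -((3:ℝ)/2) by norm_num, Real.rpow_neg hk0.le]
      congr 1
      rw [show ((3:ℝ)/2) = 1 + 1/2 by norm_num, Real.rpow_add hk0, Real.rpow_one,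
        ← Real.sqrt_eq_rpow]
    have hsk1 : 1 ≤ Real.sqrt k := by
      rw [show (1:ℝ) = Real.sqrt 1 by simp]; exact Real.sqrt_le_sqrt hk1
    have hsq2 : Real.sqrt k ^ 2 = (k:ℝ) := Real.sq_sqrt hk0.le
    have hlog2 : Real.log k ≤ 2 * Real.sqrt k := by
      have h1 : Real.log (Real.sqrt k) = Real.log k / 2 := Real.log_sqrt hk0.le
      have h2 := Real.log_le_sub_one_of_pos (show (0:ℝ) < Real.sqrt k by linarith)
      linarith
    rw [hk32]
    have hrw : ((B+4)/4) * ((k:ℝ) * Real.sqrt k)⁻¹ = (B+4)*Real.sqrt k/(4*(k:ℝ)^2) := by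
      have h : Real.sqrt k ≠ 0 := by linarith
      field_simp
      linear_combination -hsq2
    rw [hrw]
    calc |f k| ≤ (B + 2 + Real.log k)/(4*(k:ℝ)^2) := habs
      _ ≤ (B+4)*Real.sqrt k/(4*(k:ℝ)^2) := by
        apply div_le_div_of_nonneg_right ?_ (by positivity)
        nlinarith [hlog2, hsk1, hB2]
  -- summability and convergence of `v n - (1/2) log n`
  have hsummf : Summable f := by
    rw [← summable_nat_add_iff 1]
    apply Summable.of_abs
    apply Summable.of_nonneg_of_le (fun k => abs_nonneg _)
      (fun k => hfb (k+1) (by omega))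
    apply Summable.mul_left
    exact_mod_cast (summable_nat_add_iff 1).mpr
      (Real.summable_nat_rpow.mpr (by norm_num : (-(3:ℝ)/2) < -1))
  obtain ⟨T, hT⟩ := hsummf
  have hpart : Tendsto (fun n => ∑ k ∈ Finset.range n, f k) atTop (𝓝 T) :=
    hT.tendsto_sum_nat
  have hvlog : Tendsto (fun n : ℕ => v n - (1/2)*Real.log n) atTop (𝓝 (u 0 + T)) := by
    have hkey : ∀ n : ℕ, v n - (1/2)*Real.log n
        = u 0 + ∑ k ∈ Finset.range n, f k := by
      intro n
      have h1 := husum n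
      have h2 := hasum n
      have h3 : ∑ k ∈ Finset.range n, f k
          = (∑ k ∈ Finset.range n, 1/u k) - ∑ k ∈ Finset.range n, a k := by
        rw [hfdef, Finset.sum_sub_distrib]
      simp only [hvdef]
      rw [h3, h2]
      linarith
    simp only [hkey]
    exact tendsto_const_nhds.add hpart
  -- the final asymptotic computation
  refine ⟨-(1/2)*(u 0 + T), ?_⟩
  set w : ℕ → ℝ := fun n => v n / (2*n) with hwdef
  set s : ℕ → ℝ := fun n => Real.sqrt (1 + w n) with hsdef
  set D : ℕ → ℝ := fun n => s n + (s n)^2 with hDdef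
  have hv0 : ∀ n : ℕ, 0 < v n := fun n => lt_of_lt_of_le hu0 (hvpos n)
  have hw0 : ∀ n : ℕ, 1 ≤ n → 0 < w n := by
    intro n hn
    have hn0 : (0:ℝ) < n := by exact_mod_cast hn
    have := hv0 n
    simp only [hwdef]; positivity
  have hs1 : ∀ n : ℕ, 1 ≤ n → 1 ≤ s n := by
    intro n hn
    have := hw0 n hn
    simp only [hsdef]
    have h := Real.sqrt_le_sqrt (show (1:ℝ) ≤ 1 + w n by linarith)
    rwa [Real.sqrt_one] at h
  have hs2 : ∀ n : ℕ, 1 ≤ n → (s n)^2 = 1 + w n := by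
    intro n hn
    have := hw0 n hn
    exact Real.sq_sqrt (by linarith)
  have hD2 : ∀ n : ℕ, 1 ≤ n → 2 ≤ D n := by
    intro n hn
    have h1 := hs1 n hn
    have : (1:ℝ) ≤ (s n)^2 := by nlinarith
    simp only [hDdef]; linarith
  have hDle : ∀ n : ℕ, 1 ≤ n → D n - 2 ≤ 2 * w n := by
    intro n hn
    have h1 := hs1 n hn
    have h2 := hs2 n hn
    have h3 := hw0 n hn
    have hsle : s n ≤ 1 + w n := by nlinarith
    simp only [hDdef]; nlinarith
  -- the error term tends to zero
  have hg : Tendsto (fun n : ℕ => (B + Real.log n)^2/(4*(n:ℝ))) atTop (𝓝 0) := by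
    have h1 := Real.tendsto_pow_log_div_mul_add_atTop 4 0 2 (by norm_num)
    have h2 := Real.tendsto_pow_log_div_mul_add_atTop 4 0 1 (by norm_num)
    have h3 := Real.tendsto_pow_log_div_mul_add_atTop 4 0 0 (by norm_num)
    have h4 := ((h3.const_mul (B^2)).add ((h2.const_mul (2*B)).add h1))
    rw [show (B^2*0 + (2*B*0 + 0) : ℝ) = 0 by ring] at h4
    have h5 : Tendsto (fun x : ℝ => (B + Real.log x)^2/(4*x)) atTop (𝓝 0) := by
      apply h4.congr
      intro x; ring
    exact h5.comp tendsto_natCast_atTop_atTop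
  have hterm2 : Tendsto (fun n : ℕ => v n * (D n - 2)/(2*D n)) atTop (𝓝 0) := by
    apply tendsto_of_tendsto_of_tendsto_of_le_of_le' tendsto_const_nhds hg
    · filter_upwards [eventually_ge_atTop 1] with n hn
      have h1 := hD2 n hn
      have h2 := hv0 n
      exact div_nonneg (mul_nonneg h2.le (by linarith)) (by linarith)
    · filter_upwards [eventually_ge_atTop 1] with n hn
      have hn0 : (0:ℝ) < n := by exact_mod_cast hn
      have h1 := hD2 n hn
      have h2 := hv0 n
      have h3 := hDle n hn
      have h4 := hw0 n hn
      have h5 : v n ≤ B + Real.log n := hvle n hn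
      have hlogn : 0 ≤ Real.log n := Real.log_nonneg (by exact_mod_cast hn)
      have hL : 0 ≤ B + Real.log n := by linarith
      calc v n * (D n - 2)/(2*D n) ≤ v n * (D n - 2)/4 := by
            apply div_le_div_of_nonneg_left (by nlinarith) (by norm_num) (by linarith)
        _ ≤ v n * (2 * w n)/4 := by
            apply div_le_div_of_nonneg_right ?_ (by norm_num)
            apply mul_le_mul_of_nonneg_left h3 h2.le
        _ = v n^2/(4*(n:ℝ)) := by
            simp only [hwdef]; field_simp
        _ ≤ (B + Real.log n)^2/(4*(n:ℝ)) := by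
            apply div_le_div_of_nonneg_right ?_ (by positivity)
            nlinarith [h5, h2, hL]
  have hterm1 : Tendsto (fun n : ℕ => -(1/2)*((v n) - (1/2)*Real.log n)) atTop
      (𝓝 (-(1/2)*(u 0 + T))) := hvlog.const_mul _
  have hF : Tendsto (fun n : ℕ => -(1/2)*((v n) - (1/2)*Real.log n)
      + v n * (D n - 2)/(2*D n)) atTop (𝓝 (-(1/2)*(u 0 + T))) := by
    simpa using hterm1.add hterm2
  apply hF.congr'
  filter_upwards [eventually_ge_atTop 1] with n hn
  -- both sides equal `-(v n)/(D n) + (1/4) log n`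
  have hn0 : (0:ℝ) < n := by exact_mod_cast hn
  have hyn := hy n
  have h2s := hs2 n hn
  have h1s := hs1 n hn
  have hsn0 : (0:ℝ) < s n := by linarith
  have hsne : s n ≠ 0 := ne_of_gt hsn0
  have hDne : D n ≠ 0 := by have := hD2 n hn; linarith
  have hv2n : v n = 2*(n:ℝ)*w n := by
    simp only [hwdef]; field_simp
  have sqn : (0:ℝ) < Real.sqrt n := Real.sqrt_pos.mpr hn0
  have hsqn_ne : Real.sqrt n ≠ 0 := ne_of_gt sqn
  have h2pos : (0:ℝ) < Real.sqrt 2 := Real.sqrt_pos.mpr (by norm_num)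
  have h2ne : Real.sqrt 2 ≠ 0 := ne_of_gt h2pos
  have hyu : Real.sqrt (u n) = 1/y n := by
    simp only [hudef]
    rw [show (1:ℝ)/(y n)^2 = (1/y n)^2 by rw [div_pow, one_pow],
      Real.sqrt_sq (by positivity)]
  have hueq : u n = 2*(n:ℝ)*(1 + w n) := by
    simp only [hwdef, hvdef]; field_simp; ring
  have hsqu : Real.sqrt (u n) = Real.sqrt 2 * Real.sqrt n * s n := by
    rw [hueq, show 2*(n:ℝ)*(1+w n) = 2*((n:ℝ)*(1+w n)) by ring,
      Real.sqrt_mul (by norm_num), Real.sqrt_mul hn0.le, ← mul_assoc]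
  have hun0 : 0 < u n := hupos n
  have hyn_eq : y n = 1/(Real.sqrt 2 * Real.sqrt n * s n) := by
    rw [← hsqu]
    have h := hyu
    rw [eq_div_iff (ne_of_gt hyn)] at h
    rw [eq_div_iff (ne_of_gt (Real.sqrt_pos.mpr hun0)), mul_comm]
    exact h
  have hr3 : (n:ℝ)^((3:ℝ)/2) = (n:ℝ) * Real.sqrt n := by
    rw [show ((3:ℝ)/2) = 1 + 1/2 by norm_num, Real.rpow_add hn0, Real.rpow_one,
      ← Real.sqrt_eq_rpow]
  have hrm : (n:ℝ)^(-(1:ℝ)/2) = 1/Real.sqrt n := by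
    rw [show (-(1:ℝ)/2) = -(1/2 : ℝ) by norm_num, Real.rpow_neg hn0.le,
      ← Real.sqrt_eq_rpow, one_div]
  have e1 : (2*(n:ℝ)/s n)*(s n) = 2*(n:ℝ) := div_mul_cancel₀ _ hsne
  have e2 : (2*(n:ℝ)/s n)*((s n)^2) = 2*(n:ℝ)*s n := by
    rw [sq, ← mul_assoc, e1]
  have hkeyid : 2*(n:ℝ)/s n - 2*(n:ℝ) = -(v n)/(D n) := by
    rw [eq_div_iff hDne]
    calc (2*(n:ℝ)/s n - 2*(n:ℝ)) * (D n)
        = (2*(n:ℝ)/s n)*(s n) + (2*(n:ℝ)/s n)*((s n)^2)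
          - 2*(n:ℝ)*(s n) - 2*(n:ℝ)*((s n)^2) := by simp only [hDdef]; ring
      _ = 2*(n:ℝ) + 2*(n:ℝ)*s n - 2*(n:ℝ)*(s n) - 2*(n:ℝ)*(1 + w n) := by
          rw [e1, e2, h2s]
      _ = -(2*(n:ℝ)*w n) := by ring
      _ = -(v n) := by rw [← hv2n]
  have idB : -(1/2)*((v n) - (1/2)*Real.log n) + v n * (D n - 2)/(2*D n)
      = -(v n)/(D n) + (1/4)*Real.log n := by
    field_simp
    ring
  have idA : 2 * (n : ℝ) ^ ((3 : ℝ) / 2) *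
        (Real.sqrt 2 * y n - (n : ℝ) ^ (-(1 : ℝ) / 2) +
          (1 / 8) * Real.log n / (n : ℝ) ^ ((3 : ℝ) / 2))
      = -(v n)/(D n) + (1/4)*Real.log n := by
    rw [hr3, hrm, hyn_eq, ← hkeyid]
    field_simp
    ring
  rw [idB, idA]
end
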